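/- Let R be a commutative ring and q ∈ M_n(R) an idempotent. Then im(q) is a rank-1 projective R-module if and only if Tr(q) = 1 and all 2×2 minors of q vanish. -/

import Mathlib

open TensorProduct LinearMap Matrix

section StmtAux

theorem aux_scalar {R : Type} [CommRing R] {M N : Type} [AddCommGroup M] [Module R M]
    [AddCommGroup N] [Module R N] (e : TensorProduct R M N ≃ₗ[R] R) (f : M →ₗ[R] M) :
    ∃ r : R, ∀ x, f x = r • x := by
  set r : R := e ((f.rTensor N) (e.symm 1)) with hr
  have hA : ∀ z : M ⊗[R] N, f.rTensor N z = r • z := by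
    intro z
    conv_lhs => rw [← e.symm_apply_apply z]
    have h2 : e.symm (e z) = (e z) • e.symm 1 := by
      rw [← _root_.map_smul, smul_eq_mul, mul_one]
    rw [h2, _root_.map_smul]
    have h3 : (f.rTensor N) (e.symm 1) = e.symm r := by rw [hr, e.symm_apply_apply]
    rw [h3, ← _root_.map_smul, smul_eq_mul, mul_comm, ← smul_eq_mul, _root_.map_smul,
      e.symm_apply_apply]
  -- B : (M ⊗ N) ⊗ M →ₗ M
  set e₂ : N ⊗[R] M →ₗ[R] R := e.toLinearMap ∘ₗ (TensorProduct.comm R N M).toLinearMap with he₂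
  set B : (M ⊗[R] N) ⊗[R] M →ₗ[R] M :=
    (TensorProduct.rid R M).toLinearMap ∘ₗ (LinearMap.lTensor M e₂) ∘ₗ
      (TensorProduct.assoc R M N M).toLinearMap with hB
  set L : M → (M ⊗[R] N →ₗ[R] (M ⊗[R] N) ⊗[R] M) :=
    fun x => (LinearMap.rTensor M ((TensorProduct.mk R M N) x)) ∘ₗ
      (TensorProduct.comm R M N).toLinearMap with hLdef
  have hBL : ∀ (x : M) (z : M ⊗[R] N), B (L x z) = e z • x := by
    intro x z
    induction z using TensorProduct.induction_on with
    | zero => simp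
    | tmul p n => simp [hB, hLdef, he₂, TensorProduct.assoc_tmul]
    | add z₁ z₂ h₁ h₂ => rw [map_add, map_add, map_add, add_smul, h₁, h₂]
  have hXL : ∀ (x : M) (z : M ⊗[R] N),
      (f.rTensor N).rTensor M (L x z) = L (f x) z := by
    intro x z
    induction z using TensorProduct.induction_on with
    | zero => simp
    | tmul p n => simp [hLdef]
    | add z₁ z₂ h₁ h₂ => rw [map_add, map_add, map_add, h₁, h₂]
  have hX : ∀ w : (M ⊗[R] N) ⊗[R] M, (f.rTensor N).rTensor M w = r • w := by
    intro w
    induction w using TensorProduct.induction_on with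
    | zero => simp
    | tmul u p => rw [LinearMap.rTensor_tmul, hA, TensorProduct.smul_tmul']
    | add w₁ w₂ h₁ h₂ => rw [map_add, h₁, h₂, smul_add]
  refine ⟨r, fun x => ?_⟩
  have he1 : e (e.symm 1) = (1 : R) := e.apply_symm_apply 1
  calc f x = e (e.symm 1) • f x := by rw [he1, one_smul]
    _ = B (L (f x) (e.symm 1)) := (hBL _ _).symm
    _ = B ((f.rTensor N).rTensor M (L x (e.symm 1))) := by rw [hXL]
    _ = B (r • L x (e.symm 1)) := by rw [hX]
    _ = r • B (L x (e.symm 1)) := map_smul _ _ _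
    _ = r • (e (e.symm 1) • x) := by rw [hBL]
    _ = r • x := by rw [he1, one_smul]

variable {R : Type} [CommRing R] {n : ℕ}

/-- column j of q as an element of the range of `q.mulVecLin`. -/
noncomputable def colP (q : Matrix (Fin n) (Fin n) R) (j : Fin n) :
    ↥(LinearMap.range q.mulVecLin) :=
  ⟨q *ᵥ Pi.single j 1, ⟨Pi.single j 1, rfl⟩⟩

theorem colP_val (q : Matrix (Fin n) (Fin n) R) (j : Fin n) :
    (colP q j).1 = fun i => q i j := by
  simp [colP]; rfl

theorem fix_of_mem (q : Matrix (Fin n) (Fin n) R) (hq : q * q = q)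
    {v : Fin n → R} (hv : v ∈ LinearMap.range q.mulVecLin) : q *ᵥ v = v := by
  obtain ⟨u, hu⟩ := hv
  rw [← hu]
  simp only [mulVecLin_apply, mulVec_mulVec, hq]

theorem mem_decomp (q : Matrix (Fin n) (Fin n) R) (hq : q * q = q)
    (x : ↥(LinearMap.range q.mulVecLin)) :
    x = ∑ j, (x.1 j) • colP q j := by
  apply Subtype.ext
  have h1 : (∑ j, (x.1 j) • colP q j).1 = ∑ j, (x.1 j) • (colP q j).1 := by
    simp
  rw [h1]
  have h2 : ∀ j : Fin n, (x.1 j) • (colP q j).1 = q *ᵥ Pi.single j (x.1 j) := by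
    intro j
    rw [colP]
    ext i
    simp [mul_comm]
  calc x.1 = q *ᵥ x.1 := (fix_of_mem q hq x.2).symm
    _ = q *ᵥ (∑ j, Pi.single j (x.1 j)) := by rw [Finset.univ_sum_single]
    _ = ∑ j, q *ᵥ Pi.single j (x.1 j) := by
        rw [← mulVecLin_apply, map_sum]; simp
    _ = ∑ j, (x.1 j) • (colP q j).1 := by
        refine Finset.sum_congr rfl fun j _ => (h2 j).symm

theorem one_mem_span (q : Matrix (Fin n) (Fin n) R) (hq : q * q = q)
    {N : Type} [AddCommGroup N] [Module R N]
    (e : TensorProduct R (LinearMap.range q.mulVecLin) N ≃ₗ[R] R) :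
    (1 : R) ∈ Ideal.span (Set.range fun p : Fin n × Fin n => q p.1 p.2) := by
  set I := Ideal.span (Set.range fun p : Fin n × Fin n => q p.1 p.2) with hI
  have hqmem : ∀ a b : Fin n, q a b ∈ I :=
    fun a b => Ideal.subset_span ⟨(a, b), rfl⟩
  have key : ∀ z : TensorProduct R (LinearMap.range q.mulVecLin) N, e.toLinearMap z ∈ I := by
    intro z
    induction z using TensorProduct.induction_on with
    | zero => rw [map_zero]; exact I.zero_mem
    | add z₁ z₂ h₁ h₂ => rw [map_add]; exact I.add_mem h₁ h₂
    | tmul x nn =>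
      have hco : ∀ j : Fin n, x.1 j ∈ I := by
        intro j
        obtain ⟨u, hu⟩ := x.2
        have : x.1 j = ∑ i, q j i * u i := by
          rw [← hu]; simp [mulVecLin_apply, mulVec, dotProduct]
        rw [this]
        exact I.sum_mem fun i _ => I.mul_mem_right _ (hqmem j i)
      have hx := mem_decomp q hq x
      have step : e.toLinearMap (x ⊗ₜ nn) = ∑ j, (x.1 j) * e.toLinearMap (colP q j ⊗ₜ nn) := by
        conv_lhs => rw [hx]
        rw [TensorProduct.sum_tmul, map_sum]
        refine Finset.sum_congr rfl fun j _ => ?_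
        rw [← TensorProduct.smul_tmul', _root_.map_smul, smul_eq_mul]
      rw [step]
      exact I.sum_mem fun j _ => I.mul_mem_right _ (hco j)
  have h1 : e.toLinearMap (e.symm 1) = (1 : R) := by
    rw [LinearEquiv.coe_coe, e.apply_symm_apply]
  exact h1 ▸ key (e.symm 1)

theorem entry_lemma (q : Matrix (Fin n) (Fin n) R) (k l i j : Fin n) :
    (q * single k l (1:R) * q) i j = q i k * q l j := by
  rw [Matrix.mul_apply, Finset.sum_eq_single l]
  · rw [mul_single_apply_same, mul_one]
  · intro b _ hb
    rw [mul_single_apply_of_ne _ _ _ _ _ hb, zero_mul]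
  · intro h; exact absurd (Finset.mem_univ l) h

theorem forward_dir (q : Matrix (Fin n) (Fin n) R) (hq : q * q = q)
    {N : Type} [AddCommGroup N] [Module R N]
    (e : TensorProduct R (LinearMap.range q.mulVecLin) N ≃ₗ[R] R) :
    q.trace = 1 ∧ ∀ i j k l, q i k * q j l = q i l * q j k := by
  have hmemP : ∀ (A : Matrix (Fin n) (Fin n) R) (v : Fin n → R),
      v ∈ LinearMap.range q.mulVecLin →
      (q * A).mulVecLin v ∈ LinearMap.range q.mulVecLin := by
    intro A v _
    refine ⟨A *ᵥ v, ?_⟩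
    rw [mulVecLin_apply, mulVecLin_apply, mulVec_mulVec]
  have hend : ∀ k l : Fin n, ∃ r : R, ∀ x : ↥(LinearMap.range q.mulVecLin),
      ((q * single k l (1:R)).mulVecLin.restrict
        (fun v hv => hmemP (single k l (1:R)) v hv)) x = r • x :=
    fun k l => aux_scalar e _
  choose lam hlam using hend
  have hR1 : ∀ i j k l, q i k * q l j = lam k l * q i j := by
    intro i j k l
    have h := congrArg Subtype.val (hlam k l (colP q j))
    rw [LinearMap.restrict_coe_apply] at h
    have key : ((q * single k l (1:R) * q) *ᵥ Pi.single j 1)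
        = lam k l • (q *ᵥ Pi.single j 1) := by
      rw [← mulVec_mulVec]
      exact h
    have h' := congrFun key i
    simp only [mulVec_single_one, Pi.smul_apply, smul_eq_mul, mul_one] at h'
    rw [← entry_lemma q k l i j]
    exact h'
  have hR3 : ∀ k l, q l k = lam k l * q.trace := by
    intro k l
    have h1 : ∑ i, q i k * q l i = ∑ i, lam k l * q i i :=
      Finset.sum_congr rfl fun i _ => hR1 i i k l
    have h2 : ∑ i, q i k * q l i = q l k := by
      have : (q * q) l k = ∑ i, q l i * q i k := Matrix.mul_apply
      rw [hq] at this
      rw [this]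
      exact Finset.sum_congr rfl fun i _ => mul_comm _ _
    have h3 : ∑ i, lam k l * q i i = lam k l * q.trace := by
      rw [← Finset.mul_sum]
      rfl
    rw [← h2, h1, h3]
  have hG1 : ∀ i j k l, q l k * q i j = q.trace * (q i k * q l j) := by
    intro i j k l
    rw [hR3 k l, hR1 i j k l]
    ring
  have hsq : ∀ a b, (1 - q.trace) * (q a b * q a b) = 0 := by
    intro a b
    have h := hG1 a b b a
    linear_combination h
  have ht : q.trace = 1 := by
    set d := 1 - q.trace with hd
    have hgen : ∀ a b : Fin n, q a b * q a b ∈ LinearMap.ker (LinearMap.lsmul R R d) := by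
      intro a b
      rw [LinearMap.mem_ker, LinearMap.lsmul_apply, smul_eq_mul]
      exact hsq a b
    have htop : LinearMap.ker (LinearMap.lsmul R R d) = ⊤ := by
      by_contra hne
      obtain ⟨m, hmmax, hle⟩ := Ideal.exists_le_maximal _ hne
      have hprime : m.IsPrime := hmmax.isPrime
      have hqm : ∀ a b : Fin n, q a b ∈ m := fun a b =>
        (hprime.mem_or_mem (hle (hgen a b))).elim id id
      have hsub : Ideal.span (Set.range fun p : Fin n × Fin n => q p.1 p.2) ≤ m :=
        Ideal.span_le.2 (by rintro x ⟨p, rfl⟩; exact hqm p.1 p.2)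
      exact hmmax.ne_top ((Ideal.eq_top_iff_one m).2 (hsub (one_mem_span q hq e)))
    have h1 : (1 : R) ∈ LinearMap.ker (LinearMap.lsmul R R d) := htop ▸ Submodule.mem_top
    rw [LinearMap.mem_ker, LinearMap.lsmul_apply, smul_eq_mul, mul_one, hd,
      sub_eq_zero] at h1
    exact h1.symm
  refine ⟨ht, fun i j k l => ?_⟩
  have h := hG1 j l k i
  rw [ht, one_mul] at h
  rw [h]
  ring

theorem converse_dir (q : Matrix (Fin n) (Fin n) R) (hq : q * q = q)
    (ht : q.trace = 1) (hm : ∀ i j k l, q i k * q j l = q i l * q j k) :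
    Nonempty (TensorProduct R (LinearMap.range q.mulVecLin)
      (LinearMap.range qᵀ.mulVecLin) ≃ₗ[R] R) := by
  have hqT : qᵀ * qᵀ = qᵀ := by rw [← Matrix.transpose_mul, hq]
  set P := LinearMap.range q.mulVecLin
  set Q := LinearMap.range qᵀ.mulVecLin
  have hcolval : ∀ (j : Fin n) (a : Fin n), (colP q j).1 a = q a j := by
    intro j a; simp [colP]
  have hrowval : ∀ (j : Fin n) (a : Fin n), (colP qᵀ j).1 a = q j a := by
    intro j a; simp [colP]
  have hdot : ∀ j l : Fin n, (colP q j).1 ⬝ᵥ (colP qᵀ l).1 = q l j := by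
    intro j l
    have h1 : (colP q j).1 ⬝ᵥ (colP qᵀ l).1 = ∑ a, q l a * q a j := by
      rw [dotProduct]
      refine Finset.sum_congr rfl fun a _ => ?_
      rw [hcolval, hrowval, mul_comm]
    rw [h1, ← Matrix.mul_apply, hq]
  -- the bilinear pairing
  set bil : ↥P →ₗ[R] ↥Q →ₗ[R] R := LinearMap.mk₂ R (fun x y => x.1 ⬝ᵥ y.1)
    (fun x x' y => by simp [add_dotProduct])
    (fun c x y => by simp [smul_dotProduct])
    (fun x y y' => by simp [dotProduct_add])
    (fun c x y => by simp [dotProduct_smul])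
    with hbil
  set Φ : TensorProduct R ↥P ↥Q →ₗ[R] R := TensorProduct.lift bil with hΦ
  set Z : TensorProduct R ↥P ↥Q := ∑ i, colP q i ⊗ₜ colP qᵀ i with hZ
  set Ψ : R →ₗ[R] TensorProduct R ↥P ↥Q := LinearMap.toSpanSingleton R _ Z with hΨ
  have hΦtmul : ∀ (x : ↥P) (y : ↥Q), Φ (x ⊗ₜ y) = x.1 ⬝ᵥ y.1 := by
    intro x y; rw [hΦ, TensorProduct.lift.tmul]; rfl
  have hΦZ : Φ Z = 1 := by
    rw [hZ, map_sum]
    have : ∀ i : Fin n, Φ (colP q i ⊗ₜ colP qᵀ i) = q i i := by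
      intro i; rw [hΦtmul, hdot]
    rw [Finset.sum_congr rfl fun i _ => this i]
    rw [← ht, Matrix.trace]
    rfl
  -- key lemma C
  have hC : ∀ j l : Fin n, (q l j) • Z = colP q j ⊗ₜ[R] colP qᵀ l := by
    intro j l
    have key1 : ∀ i : Fin n, (q l j) • colP q i = (q l i) • colP q j := by
      intro i
      apply Subtype.ext
      rw [SetLike.val_smul, SetLike.val_smul]
      ext a
      rw [Pi.smul_apply, Pi.smul_apply, smul_eq_mul, smul_eq_mul, hcolval, hcolval]
      calc q l j * q a i = q a i * q l j := mul_comm _ _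
        _ = q a j * q l i := hm a l i j
        _ = q l i * q a j := mul_comm _ _
    have key2 : ∑ i, (q l i) • colP qᵀ i = colP qᵀ l := by
      apply Subtype.ext
      have h1 : (∑ i, (q l i) • colP qᵀ i).1 = ∑ i, (q l i) • (colP qᵀ i).1 := by
        simp
      rw [h1]
      ext a
      rw [Finset.sum_apply]
      have h2 : ∀ i : Fin n, ((q l i) • (colP qᵀ i).1) a = q l i * q i a := by
        intro i; rw [Pi.smul_apply, smul_eq_mul, hrowval]
      rw [Finset.sum_congr rfl fun i _ => h2 i, ← Matrix.mul_apply, hq, hrowval]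
    calc (q l j) • Z = ∑ i, (q l j) • (colP q i ⊗ₜ colP qᵀ i) := by
          rw [hZ, Finset.smul_sum]
      _ = ∑ i, ((q l j) • colP q i) ⊗ₜ[R] colP qᵀ i := by
          refine Finset.sum_congr rfl fun i _ => TensorProduct.smul_tmul' _ _ _
      _ = ∑ i, ((q l i) • colP q j) ⊗ₜ[R] colP qᵀ i := by
          refine Finset.sum_congr rfl fun i _ => by rw [key1 i]
      _ = ∑ i, colP q j ⊗ₜ[R] ((q l i) • colP qᵀ i) := by
          refine Finset.sum_congr rfl fun i _ => TensorProduct.smul_tmul _ _ _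
      _ = colP q j ⊗ₜ[R] (∑ i, (q l i) • colP qᵀ i) := by
          rw [TensorProduct.tmul_sum]
      _ = colP q j ⊗ₜ[R] colP qᵀ l := by rw [key2]
  -- expansion of bilinear maps
  have exp1 : ∀ (F : ↥P →ₗ[R] ↥Q →ₗ[R] TensorProduct R ↥P ↥Q) (x : ↥P) (y : ↥Q),
      F x y = ∑ j, (x.1 j) • F (colP q j) y := by
    intro F x y
    conv_lhs => rw [mem_decomp q hq x]
    rw [map_sum, LinearMap.sum_apply]
    refine Finset.sum_congr rfl fun j _ => ?_
    rw [_root_.map_smul, LinearMap.smul_apply]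
  have exp2 : ∀ (G : ↥Q →ₗ[R] TensorProduct R ↥P ↥Q) (y : ↥Q),
      G y = ∑ l, (y.1 l) • G (colP qᵀ l) := by
    intro G y
    conv_lhs => rw [mem_decomp qᵀ hqT y]
    rw [map_sum]
    refine Finset.sum_congr rfl fun l _ => ?_
    rw [_root_.map_smul]
  have expand : ∀ (F : ↥P →ₗ[R] ↥Q →ₗ[R] TensorProduct R ↥P ↥Q) (x : ↥P) (y : ↥Q),
      F x y = ∑ j, ∑ l, (x.1 j * y.1 l) • F (colP q j) (colP qᵀ l) := by
    intro F x y
    rw [exp1 F x y]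
    refine Finset.sum_congr rfl fun j _ => ?_
    rw [exp2 (F (colP q j)) y, Finset.smul_sum]
    refine Finset.sum_congr rfl fun l _ => ?_
    rw [smul_smul]
  have main : ∀ (x : ↥P) (y : ↥Q), Ψ (Φ (x ⊗ₜ y)) = x ⊗ₜ y := by
    intro x y
    have h1 : Ψ (Φ (x ⊗ₜ y)) = (x.1 ⬝ᵥ y.1) • Z := by
      rw [hΦtmul]; rw [hΨ]; rw [LinearMap.toSpanSingleton_apply]
    set F₁ : ↥P →ₗ[R] ↥Q →ₗ[R] TensorProduct R ↥P ↥Q := LinearMap.mk₂ R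
      (fun x y => (x.1 ⬝ᵥ y.1) • Z)
      (fun x x' y => by simp [add_dotProduct, add_smul])
      (fun c x y => by simp [smul_dotProduct, mul_smul])
      (fun x y y' => by simp [dotProduct_add, add_smul])
      (fun c x y => by simp [dotProduct_smul, mul_smul])
      with hF₁
    have e1 : (x.1 ⬝ᵥ y.1) • Z = F₁ x y := by rw [hF₁]; rfl
    have e2 : x ⊗ₜ[R] y = TensorProduct.mk R ↥P ↥Q x y := rfl
    rw [h1, e1, e2, expand F₁ x y, expand (TensorProduct.mk R ↥P ↥Q) x y]
    refine Finset.sum_congr rfl fun j _ => Finset.sum_congr rfl fun l _ => ?_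
    have hv1 : F₁ (colP q j) (colP qᵀ l) = (q l j) • Z := by
      rw [hF₁, LinearMap.mk₂_apply, hdot]
    rw [hv1, hC, TensorProduct.mk_apply]
  refine ⟨LinearEquiv.ofLinear Φ Ψ ?_ ?_⟩
  · apply LinearMap.ext_ring
    rw [LinearMap.comp_apply, hΨ, LinearMap.toSpanSingleton_apply, one_smul, hΦZ]
    rfl
  · apply TensorProduct.ext'
    intro x y
    rw [LinearMap.comp_apply]
    exact main x y

end StmtAux

/-- an idempotent matrix `q ∈ Mₙ(R)` has rank-1 projective
(i.e. invertible) image if and only if `Tr q = 1` and all 2×2 minors of `q`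
vanish. -/
theorem stmt_12 {R : Type} [CommRing R] {n : ℕ}
    (q : Matrix (Fin n) (Fin n) R) (hq : q * q = q) :
    (∃ (N : Type) (_ : AddCommGroup N) (_ : Module R N),
        Nonempty (TensorProduct R (LinearMap.range q.mulVecLin) N ≃ₗ[R] R)) ↔
      q.trace = 1 ∧ ∀ i j k l, q i k * q j l = q i l * q j k := by
  constructor
  · rintro ⟨N, iN, iM, ⟨e⟩⟩
    exact forward_dir q hq e
  · rintro ⟨ht, hm⟩
    obtain ⟨e⟩ := converse_dir q hq ht hm
    exact ⟨↥(LinearMap.range qᵀ.mulVecLin), inferInstance, inferInstance, ⟨e⟩⟩
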